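/- De Finetti representation of the single-group Curie–Weiss model: Let β > 0, n ∈ ℕ, and define F(m) := (1/2)((1/β)(artanh m)² + ln(1 − m²)) for m ∈ (−1,1). Then for every configuration x ∈ {−1,1}^n, exp((β/(2n))(Σ_{i=1}^n x_i)²) = 2^n √(n/(2πβ)) ∫_{(−1,1)} [∏_{i=1}^n ((1+m)/2)^{(1+x_i)/2} ((1−m)/2)^{(1−x_i)/2}] · (exp(−n F(m))/(1 − m²)) dm. Consequently the Curie–Weiss measure ℙ_CWM(x) ∝ exp((β/(2n))(Σ_i x_i)²) equals the mixture of the product measures P_m with respect to the (normalised) de Finetti measure with density proportional to exp(−nF(m))/(1−m²) on (−1,1). -/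

import Mathlib

open MeasureTheory ProbabilityTheory Filter Topology

noncomputable section

/-- The ±1 value of a vote. -/
def val (b : Bool) : ℝ := if b then 1 else -1

/-- The function `F(m) = (1/2)((1/β)(artanh m)² + ln(1 − m²))` of the de Finetti
representation of the Curie–Weiss model, with `artanh m = (1/2) ln((1+m)/(1−m))`. -/
def cwF (β m : ℝ) : ℝ :=
  (1 / 2) * ((1 / β) * ((1 / 2) * Real.log ((1 + m) / (1 - m))) ^ 2
    + Real.log (1 - m ^ 2))

/-- The probability `P_m(X_1 = x_1, …, X_n = x_n)` of a configuration
`x ∈ {−1,1}^n` under the product measure with bias `m`. -/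
def prodProb {n : ℕ} (m : ℝ) (x : Fin n → ℝ) : ℝ :=
  ∏ i, ((1 + m) / 2) ^ ((1 + x i) / 2) * ((1 - m) / 2) ^ ((1 - x i) / 2)

namespace CWMaux

/-- `artanh`, expressed as a difference of logs. -/
def art (m : ℝ) : ℝ := (1 / 2) * (Real.log (1 + m) - Real.log (1 - m))

lemma hasDerivAt_art {m : ℝ} (hm : m ∈ Set.Ioo (-1 : ℝ) 1) :
    HasDerivAt art (1 / (1 - m ^ 2)) m := by
  obtain ⟨h1, h2⟩ := hm
  have hp : (0 : ℝ) < 1 + m := by linarith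
  have hq : (0 : ℝ) < 1 - m := by linarith
  have d1 : HasDerivAt (fun y : ℝ => Real.log (1 + y)) (1 / (1 + m)) m := by
    have : HasDerivAt (fun y : ℝ => 1 + y) 1 m := (hasDerivAt_id m).const_add 1
    simpa [one_div] using this.log hp.ne'
  have d2 : HasDerivAt (fun y : ℝ => Real.log (1 - y)) (-(1 / (1 - m))) m := by
    have : HasDerivAt (fun y : ℝ => 1 - y) (-1) m := by
      exact (hasDerivAt_id' m).const_sub 1
    have := this.log hq.ne'
    simpa [one_div, neg_div] using this
  have := ((d1.sub d2).const_mul ((1 : ℝ) / 2))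
  refine this.congr_deriv ?_
  have hm2 : (1 : ℝ) - m ^ 2 ≠ 0 := by nlinarith
  field_simp
  ring

lemma art_mem {m : ℝ} (hm : m ∈ Set.Ioo (-1 : ℝ) 1) :
    art m = (1 / 2) * Real.log ((1 + m) / (1 - m)) := by
  obtain ⟨h1, h2⟩ := hm
  rw [Real.log_div (by linarith) (by linarith)]
  rfl

lemma art_injOn : Set.InjOn art (Set.Ioo (-1 : ℝ) 1) := by
  intro a ha b hb hab
  obtain ⟨ha1, ha2⟩ := ha
  obtain ⟨hb1, hb2⟩ := hb
  have hpa : (0 : ℝ) < 1 + a := by linarith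
  have hqa : (0 : ℝ) < 1 - a := by linarith
  have hpb : (0 : ℝ) < 1 + b := by linarith
  have hqb : (0 : ℝ) < 1 - b := by linarith
  have h : Real.log ((1 + a) / (1 - a)) = Real.log ((1 + b) / (1 - b)) := by
    have := hab
    unfold art at this
    rw [Real.log_div hpa.ne' hqa.ne', Real.log_div hpb.ne' hqb.ne']
    linarith
  have h2 : (1 + a) / (1 - a) = (1 + b) / (1 - b) := by
    have e1 := Real.exp_log (div_pos hpa hqa)
    have e2 := Real.exp_log (div_pos hpb hqb)
    rw [← e1, ← e2, h]
  field_simp at h2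
  nlinarith

lemma art_image : art '' (Set.Ioo (-1 : ℝ) 1) = Set.univ := by
  apply Set.eq_univ_of_forall
  intro u
  set E := Real.exp (2 * u) with hE
  have hEpos : 0 < E := Real.exp_pos _
  refine ⟨(E - 1) / (E + 1), ⟨?_, ?_⟩, ?_⟩
  · rw [neg_lt, ← neg_div, div_lt_one (by linarith)]
    linarith
  · rw [div_lt_one (by linarith)]
    linarith
  · have hp : (1 : ℝ) + (E - 1) / (E + 1) = 2 * E / (E + 1) := by
      field_simp
      ring
    have hq : (1 : ℝ) - (E - 1) / (E + 1) = 2 / (E + 1) := by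
      field_simp
      ring
    unfold art
    rw [hp, hq]
    rw [← Real.log_div (by positivity) (by positivity)]
    have : 2 * E / (E + 1) / (2 / (E + 1)) = E := by
      field_simp
    rw [this, hE, Real.log_exp]
    ring

lemma gauss_integrable {a : ℝ} (c : ℝ) (ha : 0 < a) :
    Integrable (fun t : ℝ => Real.exp (c * t - a * t ^ 2)) := by
  have h : ∀ t : ℝ, c * t - a * t ^ 2 = c ^ 2 / (4 * a) + -a * (t - c / (2 * a)) ^ 2 := by
    intro t; field_simp; ring
  simp_rw [h, Real.exp_add]
  exact ((integrable_exp_neg_mul_sq ha).comp_sub_right (c / (2 * a))).const_mul _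

lemma gauss_integral {a : ℝ} (c : ℝ) (ha : 0 < a) :
    ∫ t : ℝ, Real.exp (c * t - a * t ^ 2)
      = Real.sqrt (Real.pi / a) * Real.exp (c ^ 2 / (4 * a)) := by
  have h : ∀ t : ℝ, c * t - a * t ^ 2 = c ^ 2 / (4 * a) + -a * (t - c / (2 * a)) ^ 2 := by
    intro t; field_simp; ring
  simp_rw [h, Real.exp_add]
  rw [integral_const_mul _ _,
    integral_sub_right_eq_self (μ := volume) (fun t => Real.exp (-a * t ^ 2)) (c / (2 * a)),
    integral_gaussian]
  ring

/-- Pointwise identity for the integrand on `(-1,1)`. -/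
lemma integrand_eq (β : ℝ) (hβ : 0 < β) (n : ℕ) (x : Fin n → ℝ)
    {m : ℝ} (hm : m ∈ Set.Ioo (-1 : ℝ) 1) :
    prodProb m x * (Real.exp (-(n : ℝ) * cwF β m) / (1 - m ^ 2))
      = ((2 : ℝ) ^ n)⁻¹ *
        (|1 / (1 - m ^ 2)| •
          Real.exp ((∑ i, x i) * art m - ((n : ℝ) / (2 * β)) * (art m) ^ 2)) := by
  obtain ⟨h1, h2⟩ := hm
  have hp : (0 : ℝ) < 1 + m := by linarith
  have hq : (0 : ℝ) < 1 - m := by linarith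
  have hm2 : (0 : ℝ) < 1 - m ^ 2 := by nlinarith
  have ha : (0 : ℝ) < (1 + m) / 2 := by linarith
  have hb : (0 : ℝ) < (1 - m) / 2 := by linarith
  set S := ∑ i, x i with hS
  -- Step 1: rewrite prodProb as an exponential
  have step1 : prodProb m x
      = Real.exp (Real.log ((1 + m) / 2) * (((n : ℝ) + S) / 2)
          + Real.log ((1 - m) / 2) * (((n : ℝ) - S) / 2)) := by
    unfold prodProb
    have hfac : ∀ i, ((1 + m) / 2) ^ ((1 + x i) / 2) * ((1 - m) / 2) ^ ((1 - x i) / 2)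
        = Real.exp (Real.log ((1 + m) / 2) * ((1 + x i) / 2)
            + Real.log ((1 - m) / 2) * ((1 - x i) / 2)) := by
      intro i
      rw [Real.rpow_def_of_pos ha, Real.rpow_def_of_pos hb, Real.exp_add]
    rw [Finset.prod_congr rfl (fun i _ => hfac i), ← Real.exp_sum]
    congr 1
    rw [Finset.sum_add_distrib, ← Finset.mul_sum, ← Finset.mul_sum]
    have hs1 : ∑ i, (1 + x i) / 2 = ((n : ℝ) + S) / 2 := by
      rw [← Finset.sum_div, Finset.sum_add_distrib, Finset.sum_const, Finset.card_univ,
        Fintype.card_fin]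
      simp [hS]
    have hs2 : ∑ i, (1 - x i) / 2 = ((n : ℝ) - S) / 2 := by
      rw [← Finset.sum_div, Finset.sum_sub_distrib, Finset.sum_const, Finset.card_univ,
        Fintype.card_fin]
      simp [hS]
    rw [hs1, hs2]
  -- Step 2: combine exponentials
  have key : prodProb m x * Real.exp (-(n : ℝ) * cwF β m)
      = ((2 : ℝ) ^ n)⁻¹ * Real.exp (S * art m - ((n : ℝ) / (2 * β)) * (art m) ^ 2) := by
    have h2n : ((2 : ℝ) ^ n)⁻¹ = Real.exp (-((n : ℝ) * Real.log 2)) := by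
      rw [Real.exp_neg, Real.exp_nat_mul, Real.exp_log two_pos]
    rw [step1, ← Real.exp_add, h2n, ← Real.exp_add]
    congr 1
    rw [Real.log_div hp.ne' two_ne_zero, Real.log_div hq.ne' two_ne_zero]
    unfold cwF art
    rw [Real.log_div hp.ne' hq.ne',
      show (1 : ℝ) - m ^ 2 = (1 + m) * (1 - m) by ring, Real.log_mul hp.ne' hq.ne']
    field_simp
    ring
  rw [abs_of_pos (by positivity : (0 : ℝ) < 1 / (1 - m ^ 2)), smul_eq_mul]
  rw [div_eq_mul_inv, ← mul_assoc, key]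
  field_simp

lemma hasDerivWithin (m : ℝ) (hm : m ∈ Set.Ioo (-1 : ℝ) 1) :
    HasDerivWithinAt art (1 / (1 - m ^ 2)) (Set.Ioo (-1 : ℝ) 1) m :=
  (hasDerivAt_art hm).hasDerivWithinAt

/-- Integrability of the integrand. -/
lemma f_integrableOn (β : ℝ) (hβ : 0 < β) (n : ℕ) (hn : 0 < n) (x : Fin n → ℝ) :
    IntegrableOn
      (fun m => prodProb m x * (Real.exp (-(n : ℝ) * cwF β m) / (1 - m ^ 2)))
      (Set.Ioo (-1 : ℝ) 1) := by
  set S := ∑ i, x i with hS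
  have hnn : (0 : ℝ) < (n : ℝ) := by exact_mod_cast hn
  have ha : (0 : ℝ) < (n : ℝ) / (2 * β) := by positivity
  have h0 : IntegrableOn (fun t : ℝ => Real.exp (S * t - ((n : ℝ) / (2 * β)) * t ^ 2))
      (art '' Set.Ioo (-1 : ℝ) 1) := by
    rw [art_image]
    exact (gauss_integrable S ha).integrableOn
  rw [integrableOn_image_iff_integrableOn_abs_deriv_smul measurableSet_Ioo
    hasDerivWithin art_injOn] at h0
  refine MeasureTheory.IntegrableOn.congr_fun (h0.const_mul (((2 : ℝ) ^ n)⁻¹))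
    (fun m hm => (integrand_eq β hβ n x hm).symm) measurableSet_Ioo

/-- The key integral computation. -/
lemma key_integral (β : ℝ) (hβ : 0 < β) (n : ℕ) (hn : 0 < n) (x : Fin n → ℝ) :
    (∫ m in Set.Ioo (-1 : ℝ) 1,
        prodProb m x * (Real.exp (-(n : ℝ) * cwF β m) / (1 - m ^ 2)))
      = ((2 : ℝ) ^ n)⁻¹ * (Real.sqrt (2 * Real.pi * β / n) *
          Real.exp (β / (2 * n) * (∑ i, x i) ^ 2)) := by
  set S := ∑ i, x i with hS
  have hnn : (0 : ℝ) < (n : ℝ) := by exact_mod_cast hn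
  have ha : (0 : ℝ) < (n : ℝ) / (2 * β) := by positivity
  have himg := integral_image_eq_integral_abs_deriv_smul measurableSet_Ioo
    hasDerivWithin art_injOn
    (fun t : ℝ => Real.exp (S * t - ((n : ℝ) / (2 * β)) * t ^ 2))
  rw [art_image, Measure.restrict_univ] at himg
  have hcong : (∫ m in Set.Ioo (-1 : ℝ) 1,
      prodProb m x * (Real.exp (-(n : ℝ) * cwF β m) / (1 - m ^ 2)))
      = ∫ m in Set.Ioo (-1 : ℝ) 1,
          ((2 : ℝ) ^ n)⁻¹ * (|1 / (1 - m ^ 2)| •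
            Real.exp (S * art m - ((n : ℝ) / (2 * β)) * (art m) ^ 2)) := by
    exact setIntegral_congr_fun measurableSet_Ioo (fun m hm => integrand_eq β hβ n x hm)
  rw [hcong, integral_const_mul _ _, ← himg, gauss_integral S ha]
  have e1 : Real.pi / ((n : ℝ) / (2 * β)) = 2 * Real.pi * β / n := by
    field_simp
  have e2 : S ^ 2 / (4 * ((n : ℝ) / (2 * β))) = β / (2 * n) * S ^ 2 := by
    field_simp; ring
  rw [e1, e2]

lemma sum_prodProb (n : ℕ) {m : ℝ} (hm : m ∈ Set.Ioo (-1 : ℝ) 1) :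
    ∑ y : Fin n → Bool, prodProb m (fun i => val (y i)) = 1 := by
  obtain ⟨h1, h2⟩ := hm
  have heach : ∀ y : Fin n → Bool, prodProb m (fun i => val (y i))
      = ∏ i, (if y i then (1 + m) / 2 else (1 - m) / 2) := by
    intro y
    unfold prodProb val
    refine Finset.prod_congr rfl (fun i _ => ?_)
    cases hy : y i <;> simp only [hy] <;> norm_num
  have hps := Fintype.prod_sum
    (fun (_ : Fin n) (b : Bool) => if b = true then (1 + m) / 2 else (1 - m) / 2)
  rw [Finset.sum_congr rfl (fun y _ => heach y), ← hps]
  have : ∀ i : Fin n,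
      (∑ b : Bool, (if b then (1 + m) / 2 else (1 - m) / 2)) = 1 := by
    intro i
    rw [Fintype.sum_bool, if_pos rfl, if_neg (by simp)]
    ring
  rw [Finset.prod_congr rfl (fun i _ => this i), Finset.prod_const_one]

end CWMaux

set_option maxHeartbeats 1000000 in
open CWMaux in
/-- **De Finetti representation of the single-group Curie–Weiss model**: for
`β > 0` and every configuration `x ∈ {−1,1}^n`,
`exp((β/(2n))(Σ x_i)²) = 2^n √(n/(2πβ)) ∫_{(−1,1)} P_m(x) e^{−nF(m)}/(1−m²) dm`;
consequently the Curie–Weiss measure `ℙ_CWM(x) ∝ exp((β/(2n))(Σ x_i)²)` is the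
mixture of the product measures `P_m` with respect to the normalised de Finetti
measure with density proportional to `e^{−nF(m)}/(1−m²)` on `(−1,1)`. -/
theorem cwm_de_finetti_representation
    (β : ℝ) (hβ : 0 < β) (n : ℕ) (hn : 0 < n)
    (x : Fin n → ℝ) (hx : ∀ i, x i = 1 ∨ x i = -1) :
    Real.exp (β / (2 * n) * (∑ i, x i) ^ 2)
      = 2 ^ n * Real.sqrt (n / (2 * Real.pi * β)) *
        ∫ m in Set.Ioo (-1 : ℝ) 1,
          prodProb m x * (Real.exp (-(n : ℝ) * cwF β m) / (1 - m ^ 2))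
    ∧ Real.exp (β / (2 * n) * (∑ i, x i) ^ 2) /
        (∑ y : Fin n → Bool, Real.exp (β / (2 * n) * (∑ i, val (y i)) ^ 2))
      = (∫ m in Set.Ioo (-1 : ℝ) 1,
          prodProb m x * (Real.exp (-(n : ℝ) * cwF β m) / (1 - m ^ 2))) /
        (∫ m in Set.Ioo (-1 : ℝ) 1,
          Real.exp (-(n : ℝ) * cwF β m) / (1 - m ^ 2)) := by
  have hnn : (0 : ℝ) < (n : ℝ) := by exact_mod_cast hn
  have hπ : (0 : ℝ) < Real.pi := Real.pi_pos
  have h2n : ((2 : ℝ) ^ n) ≠ 0 := by positivity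
  have hsqrt : Real.sqrt ((n : ℝ) / (2 * Real.pi * β)) * Real.sqrt (2 * Real.pi * β / n) = 1 := by
    rw [← Real.sqrt_mul (by positivity)]
    rw [show (n : ℝ) / (2 * Real.pi * β) * (2 * Real.pi * β / n) = 1 by field_simp]
    exact Real.sqrt_one
  -- first part for arbitrary x
  have part1 : ∀ z : Fin n → ℝ,
      Real.exp (β / (2 * n) * (∑ i, z i) ^ 2)
        = 2 ^ n * Real.sqrt ((n : ℝ) / (2 * Real.pi * β)) *
          ∫ m in Set.Ioo (-1 : ℝ) 1,
            prodProb m z * (Real.exp (-(n : ℝ) * cwF β m) / (1 - m ^ 2)) := by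
    intro z
    rw [key_integral β hβ n hn z]
    rw [show (2 : ℝ) ^ n * Real.sqrt ((n : ℝ) / (2 * Real.pi * β)) *
        (((2 : ℝ) ^ n)⁻¹ * (Real.sqrt (2 * Real.pi * β / n) *
          Real.exp (β / (2 * n) * (∑ i, z i) ^ 2)))
        = ((2 : ℝ) ^ n * ((2 : ℝ) ^ n)⁻¹) *
          ((Real.sqrt ((n : ℝ) / (2 * Real.pi * β)) * Real.sqrt (2 * Real.pi * β / n)) *
            Real.exp (β / (2 * n) * (∑ i, z i) ^ 2)) by ring]
    rw [mul_inv_cancel₀ h2n, hsqrt, one_mul, one_mul]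
  refine ⟨part1 x, ?_⟩
  -- second part
  set c : ℝ := 2 ^ n * Real.sqrt ((n : ℝ) / (2 * Real.pi * β)) with hc
  have hcpos : 0 < c := by
    apply mul_pos (by positivity)
    exact Real.sqrt_pos.mpr (by positivity)
  set J : ℝ := ∫ m in Set.Ioo (-1 : ℝ) 1,
      Real.exp (-(n : ℝ) * cwF β m) / (1 - m ^ 2) with hJ
  have hsum : (∑ y : Fin n → Bool, Real.exp (β / (2 * n) * (∑ i, val (y i)) ^ 2))
      = c * J := by
    have hrw : ∀ y : Fin n → Bool,
        Real.exp (β / (2 * n) * (∑ i, val (y i)) ^ 2)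
          = c * ∫ m in Set.Ioo (-1 : ℝ) 1,
              prodProb m (fun i => val (y i)) *
                (Real.exp (-(n : ℝ) * cwF β m) / (1 - m ^ 2)) := by
      intro y
      exact part1 (fun i => val (y i))
    rw [Finset.sum_congr rfl (fun y _ => hrw y), ← Finset.mul_sum]
    congr 1
    have hswap : ∫ m in Set.Ioo (-1 : ℝ) 1,
        ∑ y : Fin n → Bool, prodProb m (fun i => val (y i)) *
          (Real.exp (-(n : ℝ) * cwF β m) / (1 - m ^ 2))
        = ∑ y : Fin n → Bool, ∫ m in Set.Ioo (-1 : ℝ) 1,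
            prodProb m (fun i => val (y i)) *
              (Real.exp (-(n : ℝ) * cwF β m) / (1 - m ^ 2)) :=
      integral_finset_sum Finset.univ
        (fun y _ => f_integrableOn β hβ n hn (fun i => val (y i)))
    rw [← hswap]
    refine setIntegral_congr_fun measurableSet_Ioo (fun m hm => ?_)
    rw [← Finset.sum_mul, sum_prodProb n hm, one_mul]
  rw [part1 x, hsum]
  exact mul_div_mul_left _ _ hcpos.ne'
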